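/- Let (W,S) be an even Coxeter system, t ∈ S, and let w, w' ∈ W be two 'even' vertices (the number of t's in their expressions is even) lying in a common spherical coset vW_V (i.e. w^{-1}w' ∈ W_V for some spherical V). If c(w) ≠ c(w') (they have different colors), then {s,t} ⊆ S(w^{-1}w') for some s with 2 < m_{st} < ∞, and w^{-1}w' contains at least two (and an even number of) t's in any expression. -/

import Mathlib

open CoxeterSystem

/-- An even Coxeter system: every off-diagonal entry of the Coxeter matrix is
even or infinite (where `0` encodes `∞`). -/
def CoxeterMatrix.IsEven {B : Type*} (M : CoxeterMatrix B) : Prop :=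
  ∀ i j : B, i ≠ j → M i j = 0 ∨ Even (M i j)

/-- The standard parabolic subgroup `W_V` generated by the simple reflections
indexed by `V`. -/
def CoxeterSystem.parabolic {B W : Type*} [Group W] {M : CoxeterMatrix B}
    (cs : CoxeterSystem M W) (V : Set B) : Subgroup W :=
  Subgroup.closure (cs.simple '' V)

/-- `V ⊆ S` is spherical if the parabolic subgroup `W_V` is finite. -/
def CoxeterSystem.IsSpherical {B W : Type*} [Group W] {M : CoxeterMatrix B}
    (cs : CoxeterSystem M W) (V : Set B) : Prop :=
  (cs.parabolic V : Set W).Finite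

/-- `S(w)`: the set of generators appearing in a reduced expression for `w`. -/
def CoxeterSystem.lettersOf {B W : Type*} [Group W] {M : CoxeterMatrix B}
    (cs : CoxeterSystem M W) (w : W) : Set B :=
  {i | ∃ ω : List B, cs.IsReduced ω ∧ cs.wordProd ω = w ∧ i ∈ ω}

/-- The nerve of the Coxeter system is a flag complex: any finite set of
pairwise spherical vertices is spherical. -/
def CoxeterSystem.HasFlagNerve {B W : Type*} [Group W] {M : CoxeterMatrix B}
    (cs : CoxeterSystem M W) : Prop :=
  ∀ T : Finset B, (∀ i ∈ T, ∀ j ∈ T, i ≠ j → cs.IsSpherical {i, j}) →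
    cs.IsSpherical (T : Set B)

/-- A family of homomorphisms `g_{UT} : W_U → W` (one for each `T ⊆ S`) sending
`s ↦ s` for `s ∈ U ∩ T` and `s ↦ e` otherwise, with image inside `W_T`. -/
def IsColoringFamily {B W : Type*} [Group W] {M : CoxeterMatrix B}
    (cs : CoxeterSystem M W) (U : Set B)
    (g : Set B → ((cs.parabolic U) →* W)) : Prop :=
  ∀ T : Set B, (∀ w, g T w ∈ cs.parabolic T) ∧
    (∀ i, ∀ hi : i ∈ U, i ∈ T →
      g T ⟨cs.simple i, Subgroup.subset_closure (Set.mem_image_of_mem _ hi)⟩ = cs.simple i) ∧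
    (∀ i, ∀ hi : i ∈ U, i ∉ T →
      g T ⟨cs.simple i, Subgroup.subset_closure (Set.mem_image_of_mem _ hi)⟩ = 1)

/-- Two vertices `w, w'` of `W_U` have the same color `c(w) = c(w')`: for every
spherical `T` containing `t`, the cosets `g_{UT}(w)W_{T∖{t}}` and
`g_{UT}(w')W_{T∖{t}}` agree. -/
def SameColor {B W : Type*} [Group W] {M : CoxeterMatrix B}
    (cs : CoxeterSystem M W) (t : B) (U : Set B)
    (g : Set B → ((cs.parabolic U) →* W)) (w w' : cs.parabolic U) : Prop :=
  ∀ T : Set B, cs.IsSpherical T → t ∈ T →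
    (QuotientGroup.mk (g T w) : W ⧸ cs.parabolic (T \ {t})) = QuotientGroup.mk (g T w')

open List

attribute [local instance] Classical.propDecidable

namespace Stmt12Aux

variable {B W : Type*} [Group W] {M : CoxeterMatrix B} (cs : CoxeterSystem M W)

theorem pow_eq_one_even_or_zero (a : W) (ha : a * a = 1) {n : ℕ} (h : n = 0 ∨ Even n) :
    a ^ n = 1 := by
  rcases h with rfl | ⟨k, rfl⟩
  · simp
  · rw [← two_mul, pow_mul, pow_two, ha, one_pow]

/-- The retraction `W →* W` killing generators outside `X` (even Coxeter systems). -/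
noncomputable def retr (heven : M.IsEven) (X : Set B) : W →* W :=
  cs.lift ⟨fun i => if i ∈ X then cs.simple i else 1, by
    intro i j
    by_cases hi : i ∈ X <;> by_cases hj : j ∈ X <;> simp only [hi, hj, if_true, if_false]
    · exact cs.simple_mul_simple_pow i j
    · have hij : i ≠ j := fun h => hj (h ▸ hi)
      rw [mul_one]
      exact pow_eq_one_even_or_zero _ (cs.simple_mul_simple_self i) (heven i j hij)
    · have hij : i ≠ j := fun h => hi (h ▸ hj)
      rw [one_mul]
      exact pow_eq_one_even_or_zero _ (cs.simple_mul_simple_self j) (heven i j hij)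
    · simp⟩

theorem retr_simple (heven : M.IsEven) (X : Set B) (i : B) :
    retr cs heven X (cs.simple i) = if i ∈ X then cs.simple i else 1 :=
  cs.lift_apply_simple _ i

theorem retr_wordProd (heven : M.IsEven) (X : Set B) (ω : List B) :
    retr cs heven X (cs.wordProd ω) = cs.wordProd (ω.filter (fun i => decide (i ∈ X))) := by
  induction ω with
  | nil => simp
  | cons i ω ih =>
    rw [wordProd_cons, map_mul, retr_simple, ih]
    by_cases h : i ∈ X <;> simp [h, wordProd_cons]

theorem wordProd_mem_parabolic {X : Set B} {ω : List B} (h : ∀ i ∈ ω, i ∈ X) :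
    cs.wordProd ω ∈ cs.parabolic X := by
  induction ω with
  | nil => simpa using one_mem _
  | cons i ω ih =>
    rw [wordProd_cons]
    exact mul_mem (Subgroup.subset_closure (Set.mem_image_of_mem _ (h i (mem_cons_self ..))))
      (ih fun j hj => h j (mem_cons_of_mem _ hj))

theorem exists_word_of_mem_parabolic {X : Set B} {x : W} (hx : x ∈ cs.parabolic X) :
    ∃ ω : List B, (∀ i ∈ ω, i ∈ X) ∧ cs.wordProd ω = x := by
  refine Subgroup.closure_induction ?_ ?_ ?_ ?_ hx
  · rintro x ⟨i, hi, rfl⟩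
    exact ⟨[i], by simpa using hi, by simp⟩
  · exact ⟨[], by simp, by simp⟩
  · rintro x y _ _ ⟨ω₁, h₁, rfl⟩ ⟨ω₂, h₂, rfl⟩
    exact ⟨ω₁ ++ ω₂, by intro i hi; rcases mem_append.mp hi with h | h; exacts [h₁ i h, h₂ i h],
      cs.wordProd_append ω₁ ω₂⟩
  · rintro x _ ⟨ω, h, rfl⟩
    exact ⟨ω.reverse, fun i hi => h i (mem_reverse.mp hi), by simp⟩

theorem retr_fixes (heven : M.IsEven) {X : Set B} {x : W} (hx : x ∈ cs.parabolic X) :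
    retr cs heven X x = x := by
  obtain ⟨ω, hω, rfl⟩ := exists_word_of_mem_parabolic cs hx
  rw [retr_wordProd]
  congr 1
  exact List.filter_eq_self.mpr fun i hi => decide_eq_true (hω i hi)

theorem mem_of_mem_reduced (heven : M.IsEven) {X : Set B} {x : W} (hx : x ∈ cs.parabolic X)
    {ω : List B} (hred : cs.IsReduced ω) (hprod : cs.wordProd ω = x) {i : B} (hi : i ∈ ω) :
    i ∈ X := by
  by_contra hiX
  have h1 : cs.wordProd (ω.filter (fun j => decide (j ∈ X))) = x := by
    rw [← retr_wordProd cs heven X, hprod, retr_fixes cs heven hx]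
  have h2 : (ω.filter (fun j => decide (j ∈ X))).length < ω.length := by
    refine lt_of_le_of_ne (List.length_filter_le _ _) fun h => ?_
    have := (List.filter_sublist (l := ω) (p := fun j => decide (j ∈ X))).eq_of_length h
    rw [← this, List.mem_filter] at hi
    exact hiX (of_decide_eq_true hi.2)
  have := cs.length_wordProd_le (ω.filter (fun j => decide (j ∈ X)))
  rw [h1] at this
  have hred' : cs.length x = ω.length := hprod ▸ hred
  omega


theorem simple_commute_of_two {i j : B} (h : M i j = 2) :
    cs.simple i * cs.simple j = cs.simple j * cs.simple i := by
  have h1 := cs.simple_mul_simple_pow i j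
  rw [h, pow_two] at h1
  have h2 := eq_inv_of_mul_eq_one_left h1
  rw [mul_inv_rev, cs.inv_simple, cs.inv_simple] at h2
  exact h2

theorem phi_wordProd [DecidableEq B] (t : B) (φ : W →* Multiplicative (ZMod 2))
    (hφ : ∀ i : B, φ (cs.simple i) =
      if i = t then Multiplicative.ofAdd (1 : ZMod 2) else 1)
    (ω : List B) : φ (cs.wordProd ω) = Multiplicative.ofAdd ((ω.count t : ZMod 2)) := by
  induction ω with
  | nil => simp
  | cons i ω ih =>
    rw [wordProd_cons, map_mul, hφ, ih, List.count_cons]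
    by_cases h : i = t
    · subst h
      rw [if_pos rfl, if_pos (by simp), Nat.cast_add, Nat.cast_one, ofAdd_add]
      exact mul_comm _ _
    · rw [if_neg h, if_neg (by simpa using h), one_mul,
        Nat.add_zero]

theorem comm_extract [DecidableEq B] (t : B) (ω : List B)
    (h : ∀ i ∈ ω, i ≠ t → cs.simple i * cs.simple t = cs.simple t * cs.simple i) :
    cs.wordProd ω =
      cs.simple t ^ (ω.count t) * cs.wordProd (ω.filter (fun i => decide (i ≠ t))) := by
  induction ω with
  | nil => simp
  | cons i ω ih =>
    rw [wordProd_cons, ih (fun j hj hjt => h j (mem_cons_of_mem _ hj) hjt), List.count_cons,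
      List.filter_cons]
    by_cases hit : i = t
    · subst hit
      rw [if_pos (by simp), if_neg (by simp)]
      rw [pow_succ', mul_assoc]
    · rw [if_neg (by simpa using hit), Nat.add_zero,
        if_pos (by simp [hit])]
      have hcomm : Commute (cs.simple i) (cs.simple t) := h i (mem_cons_self ..) hit
      rw [wordProd_cons, ← mul_assoc, ← mul_assoc, (hcomm.pow_right _).eq]

theorem g_eq_retr (heven : M.IsEven) {U : Set B} (g : Set B → ((cs.parabolic U) →* W))
    (hg : IsColoringFamily cs U g) (T : Set B) (ω : List B) :
    (∀ i ∈ ω, i ∈ U) → ∀ (hx : cs.wordProd ω ∈ cs.parabolic U),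
      g T ⟨cs.wordProd ω, hx⟩ = retr cs heven T (cs.wordProd ω) := by
  induction ω with
  | nil =>
    intro _ hx
    have h1 : (⟨cs.wordProd [], hx⟩ : cs.parabolic U) = 1 := by
      apply Subtype.ext; simp
    rw [h1, map_one, wordProd_nil, map_one]
  | cons i ω ih =>
    intro h hx
    have hiU : i ∈ U := h i (mem_cons_self ..)
    have hx' : cs.wordProd ω ∈ cs.parabolic U :=
      wordProd_mem_parabolic cs (fun j hj => h j (mem_cons_of_mem _ hj))
    have hsplit : (⟨cs.wordProd (i :: ω), hx⟩ : cs.parabolic U)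
        = ⟨cs.simple i, Subgroup.subset_closure (Set.mem_image_of_mem _ hiU)⟩ *
          ⟨cs.wordProd ω, hx'⟩ := by
      apply Subtype.ext; simp [wordProd_cons]
    rw [hsplit, map_mul, ih (fun j hj => h j (mem_cons_of_mem _ hj)) hx',
      wordProd_cons, map_mul, retr_simple]
    congr 1
    by_cases hiT : i ∈ T
    · rw [if_pos hiT, ((hg T).2.1 i hiU hiT)]
    · rw [if_neg hiT, ((hg T).2.2 i hiU hiT)]

end Stmt12Aux

open Stmt12Aux in
/-- two differently colored even vertices `w, w'` of a common
spherical coset satisfy: `{s,t} ⊆ S(w⁻¹w')` for some `s` with `2 < m_{st} < ∞`,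
and `w⁻¹w'` contains at least two, and an even number of, `t`'s in any
expression. -/
theorem statement12 {B W : Type*} [Group W] [DecidableEq B] {M : CoxeterMatrix B}
    (cs : CoxeterSystem M W) (heven : M.IsEven) (hflag : cs.HasFlagNerve) (t : B)
    (φ : W →* Multiplicative (ZMod 2))
    (hφ : ∀ i : B, φ (cs.simple i) =
      if i = t then Multiplicative.ofAdd (1 : ZMod 2) else 1)
    (g : Set B → ((cs.parabolic {s | M s t ≠ 0}) →* W))
    (hg : IsColoringFamily cs {s | M s t ≠ 0} g)
    (w w' : cs.parabolic {s | M s t ≠ 0})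
    (hweven : φ (w : W) = 1) (hw'even : φ (w' : W) = 1)
    (V : Set B) (hV : cs.IsSpherical V)
    (hmem : (w : W)⁻¹ * (w' : W) ∈ cs.parabolic V)
    (hdiff : ¬ SameColor cs t {s | M s t ≠ 0} g w w') :
    ∃ s : B, 2 < M s t ∧
      s ∈ cs.lettersOf ((w : W)⁻¹ * (w' : W)) ∧
      t ∈ cs.lettersOf ((w : W)⁻¹ * (w' : W)) ∧
      ∀ ω : List B, cs.wordProd ω = (w : W)⁻¹ * (w' : W) →
        2 ≤ ω.count t ∧ Even (ω.count t) := by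
    classical
  have hvU : (w : W)⁻¹ * (w' : W) ∈ cs.parabolic {s | M s t ≠ 0} := mul_mem (inv_mem w.2) w'.2
  -- extract the differing spherical subset T
  simp only [SameColor, not_forall] at hdiff
  obtain ⟨T, hTs, htT, hne⟩ := hdiff
  have hne' : (g T w : W)⁻¹ * (g T w' : W) ∉ cs.parabolic (T \ {t}) := by
    intro hc
    exact hne (QuotientGroup.eq.mpr hc)
  have hgv : g T (w⁻¹ * w') = (g T w)⁻¹ * g T w' := by
    rw [map_mul, map_inv]
  -- compute g T (w⁻¹ w') as the retraction applied to v
  obtain ⟨ωU, hωU, hprod⟩ := exists_word_of_mem_parabolic cs hvU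
  have hsub : (w⁻¹ * w' : cs.parabolic {s | M s t ≠ 0}) = ⟨cs.wordProd ωU, hprod ▸ hvU⟩ :=
    Subtype.ext hprod.symm
  have hT : retr cs heven T ((w : W)⁻¹ * (w' : W)) ∉ cs.parabolic (T \ {t}) := by
    intro hc
    apply hne'
    rw [← hgv, hsub, g_eq_retr cs heven g hg T ωU hωU, hprod]
    exact hc
  -- key claim: every word for v contains t
  have hkey : ∀ ω : List B, cs.wordProd ω = (w : W)⁻¹ * (w' : W) → t ∈ ω := by
    intro ω hω
    by_contra htω
    apply hT
    rw [← hω, retr_wordProd]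
    apply wordProd_mem_parabolic
    intro i hi
    rw [List.mem_filter] at hi
    exact ⟨of_decide_eq_true hi.2, fun hit => htω (hit ▸ hi.1)⟩
  -- parity claim
  have hφv : φ ((w : W)⁻¹ * (w' : W)) = 1 := by
    rw [map_mul, map_inv, hweven, hw'even, inv_one, one_mul]
  have hpar : ∀ ω : List B, cs.wordProd ω = (w : W)⁻¹ * (w' : W) → Even (ω.count t) := by
    intro ω hω
    have h2 := phi_wordProd cs t φ hφ ω
    rw [hω, hφv] at h2
    have h3 : ((ω.count t : ZMod 2)) = 0 := by
      have := congrArg Multiplicative.toAdd h2.symm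
      simpa using this
    obtain ⟨c, hc⟩ := (ZMod.natCast_eq_zero_iff _ 2).mp h3
    exact ⟨c, by omega⟩
  -- the count statement, for any word
  have hcount : ∀ ω : List B, cs.wordProd ω = (w : W)⁻¹ * (w' : W) → 2 ≤ ω.count t ∧ Even (ω.count t) := by
    intro ω hω
    have hev := hpar ω hω
    have hpos : 0 < ω.count t := List.count_pos_iff.mpr (hkey ω hω)
    obtain ⟨k, hk⟩ := hev
    exact ⟨by omega, ⟨k, hk⟩⟩
  -- reduced word for v
  obtain ⟨ω₀, hred, hvω⟩ := cs.exists_reduced_word' ((w : W)⁻¹ * (w' : W))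
  have htω₀ : t ∈ ω₀ := hkey ω₀ hvω.symm
  have hlet : ∀ i ∈ ω₀, i ∈ {s | M s t ≠ 0} := fun i hi =>
    mem_of_mem_reduced cs heven hvU hred hvω.symm hi
  -- find the generator s
  have hs : ∃ s ∈ ω₀, s ≠ t ∧ M s t ≠ 2 := by
    by_contra hcon
    push_neg at hcon
    have hcomm : ∀ i ∈ ω₀, i ≠ t →
        cs.simple i * cs.simple t = cs.simple t * cs.simple i :=
      fun i hi hit => simple_commute_of_two cs (hcon i hi hit)
    have hext := comm_extract cs t ω₀ hcomm
    rw [pow_eq_one_even_or_zero _ (cs.simple_mul_simple_self t)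
      (Or.inr (hpar ω₀ hvω.symm)), one_mul] at hext
    have htf := hkey (ω₀.filter (fun i => decide (i ≠ t))) (by rw [← hext, ← hvω])
    rw [List.mem_filter] at htf
    exact absurd rfl (of_decide_eq_true htf.2)
  obtain ⟨s, hsmem, hst, hs2⟩ := hs
  have hsU : M s t ≠ 0 := hlet s hsmem
  have hsgt : 2 < M s t := by
    rcases heven s t hst with h0 | ⟨k, hk⟩
    · exact absurd h0 hsU
    · omega
  exact ⟨s, hsgt, ⟨ω₀, hred, hvω.symm, hsmem⟩, ⟨ω₀, hred, hvω.symm, htω₀⟩, hcount⟩
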